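/- Let μ be a computable measure on 2^ω and let f be a computable order. Then there is a constant d such that for every non-atom X of μ satisfying KA(X↾f(n)) ≥ n for all n, the local granularity satisfies g_μ^X(n) ≤ f(n + d) for all n. -/

import Mathlib

open MeasureTheory
open Filter
open scoped ENNReal

/-- The length-`n` initial segment of an infinite binary sequence, as a list. -/
def strTake (X : ℕ → Bool) (n : ℕ) : List Bool := (List.range n).map X

/-- An order: a non-decreasing, unbounded function `ℕ → ℕ` with value `0` at `0`. -/
def IsOrder (f : ℕ → ℕ) : Prop :=
  Monotone f ∧ (∀ m, ∃ n, m ≤ f n) ∧ f 0 = 0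

/-- A computable order. -/
def ComputableOrder (f : ℕ → ℕ) : Prop := Computable f ∧ IsOrder f

/-- Generalized inverse of an order: `ordInv g k = min {m | g m ≥ k}`. -/
noncomputable def ordInv (g : ℕ → ℕ) (k : ℕ) : ℕ := sInf {m | k ≤ g m}

/-- A semi-measure on binary strings: `m ε = 1`, nonnegative, and superadditive
on the two one-bit extensions. -/
def IsSemiMeasure (m : List Bool → ℝ) : Prop :=
  m [] = 1 ∧ (∀ σ, 0 ≤ m σ) ∧ ∀ σ, m (σ ++ [false]) + m (σ ++ [true]) ≤ m σ

/-- A function on strings is left-c.e. if it is the limit of a computable,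
non-decreasing sequence of dyadic rational approximations from below. -/
def IsLeftCE (m : List Bool → ℝ) : Prop :=
  ∃ f : List Bool × ℕ → ℕ, Computable f ∧
    (∀ σ, Monotone fun i => (f (σ, i) : ℝ) / 2 ^ i) ∧
    ∀ σ, Tendsto (fun i => (f (σ, i) : ℝ) / 2 ^ i) atTop (nhds (m σ))

/-- A universal left-c.e. semi-measure: multiplicatively dominates every
left-c.e. semi-measure. -/
def IsUniversalSemiMeasure (M : List Bool → ℝ) : Prop :=
  IsSemiMeasure M ∧ IsLeftCE M ∧
    ∀ ρ, IsSemiMeasure ρ → IsLeftCE ρ → ∃ c : ℕ, ∀ σ, ρ σ ≤ 2 ^ c * M σ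

/-- A priori complexity with respect to the semi-measure `M`: `KA σ = -log₂ M(σ)`. -/
noncomputable def KA (M : List Bool → ℝ) (σ : List Bool) : ℝ := - Real.logb 2 (M σ)


/-- The basic open cylinder of a binary string in Cantor space. -/
def cyl (σ : List Bool) : Set (ℕ → Bool) := {X | strTake X σ.length = σ}

/-- A measure on Cantor space is computable if the values of the cylinders can be
uniformly approximated to any precision `2⁻ⁱ` by a computable function
(with dyadic rational values `f(σ,i)/2ⁱ`). -/
def ComputableMeasure (μ : Measure (ℕ → Bool)) : Prop :=
  ∃ f : List Bool × ℕ → ℕ, Computable f ∧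
    ∀ σ i, |(μ (cyl σ)).toReal - (f (σ, i) : ℝ) / 2 ^ i| ≤ (2 : ℝ)⁻¹ ^ i

/-- A `μ`-Martin-Löf test: a uniformly c.e. sequence of sets of strings generating
open sets whose `μ`-measures are bounded by `2⁻ⁱ`. -/
def MLTest (μ : Measure (ℕ → Bool)) (V : ℕ → Set (List Bool)) : Prop :=
  REPred (fun p : ℕ × List Bool => p.2 ∈ V p.1) ∧
    ∀ i, μ (⋃ σ ∈ V i, cyl σ) ≤ 2⁻¹ ^ i

/-- `X` is `μ`-Martin-Löf random if it passes every `μ`-Martin-Löf test. -/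
def MLRandom (μ : Measure (ℕ → Bool)) (X : ℕ → Bool) : Prop :=
  ∀ V, MLTest μ V → ∃ i, X ∉ ⋃ σ ∈ V i, cyl σ

/-- The local granularity of `μ` along a non-atom `X`:
`g_μ^X(n) = min {k | μ(X↾k) < 2⁻ⁿ}`. -/
noncomputable def localGranularity (μ : Measure (ℕ → Bool)) (X : ℕ → Bool) (n : ℕ) : ℕ :=
  sInf {k | μ (cyl (strTake X k)) < 2⁻¹ ^ n}

lemma strTake_length (X : ℕ → Bool) (n : ℕ) : (strTake X n).length = n := by
  simp [strTake]

lemma strTake_succ (X : ℕ → Bool) (n : ℕ) :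
    strTake X (n + 1) = strTake X n ++ [X n] := by
  simp [strTake, List.range_succ]

lemma cyl_measurable (σ : List Bool) : MeasurableSet (cyl σ) := by
  have : cyl σ = ⋂ i ∈ Finset.range σ.length, (fun X : ℕ → Bool => X i) ⁻¹' {σ.getD i false} := by
    ext X
    simp only [cyl, Set.mem_setOf_eq, Set.mem_iInter, Set.mem_preimage, Set.mem_singleton_iff,
      Finset.mem_range]
    constructor
    · intro h i hi
      have h2 : (strTake X σ.length).getD i false = σ.getD i false := by rw [h]
      rw [List.getD_eq_getElem] at h2
      · simpa [strTake] using h2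
      · simpa [strTake_length] using hi
    · intro h
      apply List.ext_getElem (by simp [strTake_length])
      intro i h1 h2
      have := h i (by simpa [strTake_length] using h1)
      simp [strTake] at this ⊢
      rw [this, List.getElem?_eq_getElem h2]
      simp
  rw [this]
  exact MeasurableSet.biInter (Set.to_countable _)
    (fun i _ => (measurable_pi_apply i) (MeasurableSet.singleton _))

lemma cyl_extend_subset (σ : List Bool) (b : Bool) : cyl (σ ++ [b]) ⊆ cyl σ := by
  intro X hX
  simp only [cyl, Set.mem_setOf_eq, List.length_append, List.length_singleton] at hX ⊢
  rw [strTake_succ] at hX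
  exact (List.append_inj hX (by simp [strTake_length])).1

lemma cyl_disjoint (σ : List Bool) : Disjoint (cyl (σ ++ [false])) (cyl (σ ++ [true])) := by
  rw [Set.disjoint_left]
  intro X h1 h2
  simp only [cyl, Set.mem_setOf_eq, List.length_append, List.length_singleton] at h1 h2
  have := h1.symm.trans h2
  simpa using List.append_inj this rfl

lemma nu_semi (μ : Measure (ℕ → Bool)) [IsProbabilityMeasure μ] :
    IsSemiMeasure (fun σ => (μ (cyl σ)).toReal) := by
  refine ⟨?_, fun σ => ENNReal.toReal_nonneg, fun σ => ?_⟩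
  · have : cyl ([] : List Bool) = Set.univ := by
      ext X; simp [cyl, strTake]
    simp [this]
  · have hadd : μ (cyl (σ ++ [false])) + μ (cyl (σ ++ [true]))
        = μ (cyl (σ ++ [false]) ∪ cyl (σ ++ [true])) :=
      (measure_union (cyl_disjoint σ) (cyl_measurable _)).symm
    have hle : μ (cyl (σ ++ [false]) ∪ cyl (σ ++ [true])) ≤ μ (cyl σ) :=
      measure_mono (Set.union_subset (cyl_extend_subset σ false) (cyl_extend_subset σ true))
    have h := hadd.le.trans hle
    rw [← ENNReal.toReal_add (measure_ne_top μ _) (measure_ne_top μ _)]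
    exact (ENNReal.toReal_le_toReal (ENNReal.add_ne_top.2 ⟨measure_ne_top μ _, measure_ne_top μ _⟩) (measure_ne_top μ _)).2 h

lemma approx_key (ν : ℝ) (hν : 0 ≤ ν) (a : ℕ → ℕ)
    (hab : ∀ i, |ν - (a i : ℝ) / 2 ^ i| ≤ (2:ℝ)⁻¹ ^ i) :
    Monotone (fun i => ((a i - 3 : ℕ) : ℝ) / 2 ^ i) ∧
      Tendsto (fun i => ((a i - 3 : ℕ) : ℝ) / 2 ^ i) atTop (nhds ν) := by
  set d : ℕ → ℝ := fun i => ((a i - 3 : ℕ) : ℝ) / 2 ^ i with hd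
  have hpow : ∀ i : ℕ, (0:ℝ) < 2 ^ i := fun i => by positivity
  have hinv : ∀ i : ℕ, (2:ℝ)⁻¹ ^ i = (2 ^ i)⁻¹ := fun i => by rw [inv_pow]
  have hd0 : ∀ i, 0 ≤ d i := fun i => by positivity
  have hsub : ∀ i, ((a i : ℝ) - 3) / 2 ^ i = (a i : ℝ) / 2 ^ i - 3 * (2 ^ i)⁻¹ := by
    intro i; ring
  have hL : ∀ i, ν - 4 * (2:ℝ)⁻¹ ^ i ≤ d i := by
    intro i
    have h1 : (a i : ℝ) - 3 ≤ ((a i - 3 : ℕ) : ℝ) := by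
      rcases le_or_gt 3 (a i) with h | h
      · rw [Nat.cast_sub h]; push_cast; linarith
      · have h0 : a i - 3 = 0 := by omega
        rw [h0]; push_cast
        have : (a i : ℝ) < 3 := by exact_mod_cast h
        linarith
    have h2 := (abs_le.1 (hab i)).2
    rw [hinv i] at h2 ⊢
    have h3 : ((a i : ℝ) - 3) / 2 ^ i ≤ d i := by
      show _ ≤ ((a i - 3 : ℕ) : ℝ) / 2 ^ i
      gcongr
    linarith [hsub i, h3]
  have hU2 : ∀ i, d i ≤ max 0 (ν - 2 * (2:ℝ)⁻¹ ^ i) := by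
    intro i
    rcases le_or_gt 3 (a i) with h | h
    · have hc : ((a i - 3 : ℕ) : ℝ) = (a i : ℝ) - 3 := by
        rw [Nat.cast_sub h]; push_cast; ring
      have h2 := (abs_le.1 (hab i)).1
      refine le_max_of_le_right ?_
      have hdi : d i = ((a i : ℝ) - 3) / 2 ^ i := by
        show ((a i - 3 : ℕ) : ℝ) / 2 ^ i = _
        rw [hc]
      rw [hdi, hinv i]
      rw [hinv i] at h2
      linarith [hsub i]
    · have h0 : a i - 3 = 0 := by omega
      simp [hd, h0]
  have hU : ∀ i, d i ≤ ν := by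
    intro i
    refine (hU2 i).trans (max_le hν ?_)
    have : (0:ℝ) ≤ 2 * (2:ℝ)⁻¹ ^ i := by positivity
    linarith
  constructor
  · apply monotone_nat_of_le_succ
    intro i
    refine (hU2 i).trans (max_le (hd0 (i+1)) ?_)
    have he : 4 * (2:ℝ)⁻¹ ^ (i+1) = 2 * (2:ℝ)⁻¹ ^ i := by
      rw [pow_succ]; ring
    have := hL (i+1)
    linarith
  · have h0 : Tendsto (fun i : ℕ => ν - 4 * (2:ℝ)⁻¹ ^ i) atTop (nhds (ν - 4 * 0)) :=
      tendsto_const_nhds.sub ((tendsto_pow_atTop_nhds_zero_of_lt_one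
        (by norm_num) (by norm_num)).const_mul 4)
    rw [mul_zero, sub_zero] at h0
    exact tendsto_of_tendsto_of_tendsto_of_le_of_le h0 tendsto_const_nhds hL hU

lemma nu_leftce (μ : Measure (ℕ → Bool)) (hcomp : ComputableMeasure μ) :
    IsLeftCE (fun σ => (μ (cyl σ)).toReal) := by
  obtain ⟨f0, hf0c, hf0⟩ := hcomp
  refine ⟨fun p => f0 p - 3, ?_, ?_, ?_⟩
  · exact (Primrec.to_comp (Primrec.nat_sub.comp Primrec.id (Primrec.const 3))).comp hf0c
  · intro σ
    exact (approx_key _ ENNReal.toReal_nonneg (fun i => f0 (σ, i)) (fun i => hf0 σ i)).1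
  · intro σ
    exact (approx_key _ ENNReal.toReal_nonneg (fun i => f0 (σ, i)) (fun i => hf0 σ i)).2

theorem stmt13 (M : List Bool → ℝ) (hM : IsUniversalSemiMeasure M)
    (μ : Measure (ℕ → Bool)) (hprob : IsProbabilityMeasure μ)
    (hcomp : ComputableMeasure μ) (f : ℕ → ℕ) (hf : Computable f)
    (hmono : Monotone f) (hunb : ∀ m, ∃ n, m ≤ f n) :
    ∃ d : ℕ, ∀ X : ℕ → Bool, μ {X} = 0 →
      (∀ n : ℕ, (n : ℝ) ≤ KA M (strTake X (f n))) →
      ∀ n, localGranularity μ X n ≤ f (n + d) := by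
  obtain ⟨c, hc⟩ := hM.2.2 (fun σ => (μ (cyl σ)).toReal) (nu_semi μ) (nu_leftce μ hcomp)
  refine ⟨c + 1, ?_⟩
  intro X _ hKA n
  set σ := strTake X (f (n + (c + 1))) with hσ
  have hMσ : M σ ≤ (2:ℝ)⁻¹ ^ (n + (c + 1)) := by
    have hk := hKA (n + (c + 1))
    rw [← hσ] at hk
    have hM0 := hM.1.2.1 σ
    rcases hM0.eq_or_lt with h0 | h0
    · rw [← h0]; positivity
    · have hlog : Real.logb 2 (M σ) ≤ -((n + (c + 1) : ℕ) : ℝ) := by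
        unfold KA at hk; linarith
      calc M σ = (2:ℝ) ^ Real.logb 2 (M σ) :=
            (Real.rpow_logb (by norm_num) (by norm_num) h0).symm
        _ ≤ (2:ℝ) ^ (-((n + (c + 1) : ℕ) : ℝ)) :=
            Real.rpow_le_rpow_of_exponent_le (by norm_num) hlog
        _ = (2:ℝ)⁻¹ ^ (n + (c + 1)) := by
            rw [Real.rpow_neg (by norm_num), Real.rpow_natCast, ← inv_pow]
  have hν : (μ (cyl σ)).toReal ≤ (2:ℝ)⁻¹ ^ (n + 1) := by
    have h2 : (2:ℝ) ^ c * (2:ℝ)⁻¹ ^ (n + (c + 1)) = (2:ℝ)⁻¹ ^ (n + 1) := by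
      rw [show n + (c + 1) = c + (n + 1) by ring, pow_add, ← mul_assoc, ← mul_pow]
      norm_num
    calc (μ (cyl σ)).toReal ≤ 2 ^ c * M σ := hc σ
      _ ≤ 2 ^ c * (2:ℝ)⁻¹ ^ (n + (c + 1)) :=
          mul_le_mul_of_nonneg_left hMσ (by positivity)
      _ = (2:ℝ)⁻¹ ^ (n + 1) := h2
  have hlt : (μ (cyl σ)).toReal < (2:ℝ)⁻¹ ^ n := by
    have h3 : (2:ℝ)⁻¹ ^ (n + 1) < (2:ℝ)⁻¹ ^ n := by
      rw [pow_succ]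
      have : (0:ℝ) < (2:ℝ)⁻¹ ^ n := by positivity
      nlinarith
    linarith
  have hne : μ (cyl σ) ≠ ⊤ := measure_ne_top μ _
  have hne2 : ((2:ℝ≥0∞)⁻¹ ^ n) ≠ ⊤ :=
    ENNReal.pow_ne_top (ENNReal.inv_ne_top.2 (by norm_num))
  have hmem : μ (cyl σ) < (2:ℝ≥0∞)⁻¹ ^ n := by
    rw [← ENNReal.toReal_lt_toReal hne hne2]
    simpa [ENNReal.toReal_pow, ENNReal.toReal_inv] using hlt
  exact Nat.sInf_le hmem
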